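/- Let a, b, b′ ∈ ℂ and x, x′ ∈ ℂ with x ≠ 0, x′ ≠ 0, b ≠ 0 and b·x′ = b′·x. Let p₁, p₂, p₃, p₄ ∈ ℂ satisfy p₁ ≠ x, p₂ ≠ x, p₃ ≠ x′, p₄ ≠ x′, p₁ ≠ p₂ and p₃ ≠ p₄, and set z = x/x′. Then cr(a + b/(p₁ − x), a + b/(p₂ − x), a + b′/(p₃ − x′), a + b′/(p₄ − x′)) = ((z·p₄ − p₁)(p₂ − z·p₃)) / ((p₂ − p₁) · z · (p₄ − p₃)). -/

import Mathlib

/-- The cross-ratio `[q₁ : q₂ ; q₃ : q₄]` of an ordered quadruple of complex numbers. -/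
noncomputable def cr (q₁ q₂ q₃ q₄ : ℂ) : ℂ :=
  ((q₄ - q₁) * (q₂ - q₃)) / ((q₂ - q₁) * (q₄ - q₃))

set_option maxHeartbeats 1000000 in
theorem scattering_amplitude_two_channel_genus_one
    (a b b' x x' p₁ p₂ p₃ p₄ z : ℂ)
    (hx : x ≠ 0) (hx' : x' ≠ 0) (hb : b ≠ 0) (hglue : b * x' = b' * x)
    (h1 : p₁ ≠ x) (h2 : p₂ ≠ x) (h3 : p₃ ≠ x') (h4 : p₄ ≠ x')
    (h12 : p₁ ≠ p₂) (h34 : p₃ ≠ p₄)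
    (hz : z = x / x') :
    cr (a + b / (p₁ - x)) (a + b / (p₂ - x)) (a + b' / (p₃ - x')) (a + b' / (p₄ - x'))
      = ((z * p₄ - p₁) * (p₂ - z * p₃)) / ((p₂ - p₁) * z * (p₄ - p₃)) := by
  have hb' : b' = b * x' / x := by field_simp [hglue]; exact hglue.symm
  have h1' : p₁ - x ≠ 0 := sub_ne_zero.mpr h1
  have h2' : p₂ - x ≠ 0 := sub_ne_zero.mpr h2
  have h3' : p₃ - x' ≠ 0 := sub_ne_zero.mpr h3
  have h4' : p₄ - x' ≠ 0 := sub_ne_zero.mpr h4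
  have h21' : p₂ - p₁ ≠ 0 := sub_ne_zero.mpr (Ne.symm h12)
  have h43' : p₄ - p₃ ≠ 0 := sub_ne_zero.mpr (Ne.symm h34)
  have hxz : x = z * x' := by rw [hz]; field_simp
  have hz0 : z ≠ 0 := by
    intro h; apply hx; rw [hxz, h, zero_mul]
  have h1z : p₁ - z * x' ≠ 0 := by rw [← hxz]; exact h1'
  have h2z : p₂ - z * x' ≠ 0 := by rw [← hxz]; exact h2'
  have e41 : (a + b' / (p₄ - x')) - (a + b / (p₁ - x))
      = b * (p₁ - z * p₄) / (z * ((p₄ - x') * (p₁ - x))) := by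
    rw [hb', hxz]; field_simp [h1z]; have h1z' : -(z * x') + p₁ ≠ 0 := by rw [neg_add_eq_sub]; exact h1z
    field_simp [h1z']; ring
  have e23 : (a + b / (p₂ - x)) - (a + b' / (p₃ - x'))
      = b * (z * p₃ - p₂) / (z * ((p₂ - x) * (p₃ - x'))) := by
    rw [hb', hxz]; field_simp [h2z]; ring
  have e21 : (a + b / (p₂ - x)) - (a + b / (p₁ - x))
      = b * (p₁ - p₂) / ((p₂ - x) * (p₁ - x)) := by
    field_simp; ring
  have e43 : (a + b' / (p₄ - x')) - (a + b' / (p₃ - x'))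
      = b * (p₃ - p₄) / (z * ((p₄ - x') * (p₃ - x'))) := by
    rw [hb', hxz]; field_simp; ring
  unfold cr
  rw [e41, e23, e21, e43]
  have h12' : p₁ - p₂ ≠ 0 := sub_ne_zero.mpr h12
  have h34' : p₃ - p₄ ≠ 0 := sub_ne_zero.mpr h34
  have key : ∀ A B C D : ℂ, B ≠ 0 → C ≠ 0 → D ≠ 0 → A / B / (C / D) = A * D / (B * C) := by
    intro A B C D hB hC hD; field_simp
  have hB : z * ((p₄ - x') * (p₁ - x)) * (z * ((p₂ - x) * (p₃ - x'))) ≠ 0 :=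
    mul_ne_zero (mul_ne_zero hz0 (mul_ne_zero h4' h1'))
      (mul_ne_zero hz0 (mul_ne_zero h2' h3'))
  have hC : b * (p₁ - p₂) * (b * (p₃ - p₄)) ≠ 0 :=
    mul_ne_zero (mul_ne_zero hb h12') (mul_ne_zero hb h34')
  have hD : (p₂ - x) * (p₁ - x) * (z * ((p₄ - x') * (p₃ - x'))) ≠ 0 :=
    mul_ne_zero (mul_ne_zero h2' h1') (mul_ne_zero hz0 (mul_ne_zero h4' h3'))
  rw [div_mul_div_comm, div_mul_div_comm]
  rw [key _ _ _ _ hB hC hD, div_eq_div_iff (mul_ne_zero hB hC)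
    (mul_ne_zero (mul_ne_zero h21' hz0) h43')]
  ring
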